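/- Let w ∈ S_n. If a permutation matrix cell (i_d, j_d) lies in D(w), (i_a, j) ∈ D(w) implies r_w(i_a, j) ≥ a whenever j ≥ j_d, and w(i_{c'}) < j_d for indices c' with (i_{c'}, j_d) ∉ D(w), i_{c'} < i_d, then r_w(i_a, j_d) ≥ a. Formally: suppose i_1 < ... < i_d, (i_d, j_d) ∈ D(w), and for each c ≤ a either (i_c, j_d) ∈ D(w) with r_w(i_c, j_d) ≥ c, or w(i_c) < j_d. Then r_w(i_a, j_d) ≥ a. -/

import Mathlib

/-- Rank function of a permutation (0-indexed): `r_w(i,j) = #{a ≤ i : w(a) ≤ j}`. -/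
def rk {n : ℕ} (w : Equiv.Perm (Fin n)) (i j : Fin n) : ℕ :=
  (Finset.univ.filter (fun a : Fin n => a ≤ i ∧ w a ≤ j)).card

/-- Membership in the Rothe diagram `D(w)`. -/
def inD {n : ℕ} (w : Equiv.Perm (Fin n)) (i j : Fin n) : Prop :=
  j < w i ∧ i < w.symm j

/-- Membership in Fulton's essential set `E(w)`. -/
def inEss {n : ℕ} (w : Equiv.Perm (Fin n)) (i j : Fin n) : Prop :=
  inD w i j ∧ (∀ i' : Fin n, (i' : ℕ) = (i : ℕ) + 1 → ¬ inD w i' j) ∧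
    (∀ j' : Fin n, (j' : ℕ) = (j : ℕ) + 1 → ¬ inD w i j')

/-- `w` contains the pattern `v`. -/
def containsPattern {n m : ℕ} (w : Equiv.Perm (Fin n)) (v : Equiv.Perm (Fin m)) : Prop :=
  ∃ f : Fin m → Fin n, StrictMono f ∧ ∀ a b : Fin m, v a < v b ↔ w (f a) < w (f b)

/-- The pattern `1243` as a permutation of `Fin 4` (0-indexed one-line notation `0 1 3 2`). -/
def p1243 : Equiv.Perm (Fin 4) := Equiv.swap 2 3

/-- The pattern `2143` as a permutation of `Fin 4` (0-indexed one-line notation `1 0 3 2`). -/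
def p2143 : Equiv.Perm (Fin 4) := Equiv.swap 0 1 * Equiv.swap 2 3

/-- The permutation of `S_{k+2}` with one-line notation `v(1) … v(k) (k+2) (k+1)`. -/
def pat {k : ℕ} (v : Equiv.Perm (Fin k)) : Equiv.Perm (Fin (k + 2)) :=
  finSumFinEquiv.symm.trans ((Equiv.sumCongr v (Equiv.swap 0 1)).trans finSumFinEquiv)

/-- Given `i_1 < … < i_{d+1}` with `(i_{d+1}, j_d) ∈ D(w)`, if for each `c ≤ a` either
`(i_c, j_d) ∈ D(w)` with `r_w(i_c, j_d) ≥ c`, or `w(i_c) < j_d`, then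
`r_w(i_a, j_d) ≥ a` (1-indexed ranks; here indices are 0-indexed so the bound is `c+1`). -/
theorem stmt15 (n d : ℕ) (w : Equiv.Perm (Fin n)) (idx : Fin (d + 1) → Fin n) (jd : Fin n)
    (hmono : StrictMono idx) (hD : inD w (idx (Fin.last d)) jd) (a : Fin (d + 1))
    (hdich : ∀ c : Fin (d + 1), c ≤ a →
      (inD w (idx c) jd ∧ (c : ℕ) + 1 ≤ rk w (idx c) jd) ∨ w (idx c) < jd) :
    (a : ℕ) + 1 ≤ rk w (idx a) jd := by
  revert hdich
  induction a using Fin.induction with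
  | zero =>
    intro hdich
    rcases hdich 0 le_rfl with ⟨_, h⟩ | h
    · exact h
    · have hm : idx 0 ∈ Finset.univ.filter (fun x : Fin n => x ≤ idx 0 ∧ w x ≤ jd) := by
        simp [le_of_lt h]
      simpa [rk] using Finset.card_pos.mpr ⟨_, hm⟩
  | succ b ih =>
    intro hdich
    rcases hdich b.succ le_rfl with ⟨_, h⟩ | h
    · simpa using h
    · have hb : (b : ℕ) + 1 ≤ rk w (idx b.castSucc) jd := by
        simpa using ih (fun c hc => hdich c (le_trans hc (Fin.castSucc_lt_succ : b.castSucc < b.succ).le))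
      have hlt : idx b.castSucc < idx b.succ := hmono (Fin.castSucc_lt_succ : b.castSucc < b.succ)
      have hsub : Finset.univ.filter (fun x : Fin n => x ≤ idx b.castSucc ∧ w x ≤ jd) ⊆
          Finset.univ.filter (fun x : Fin n => x ≤ idx b.succ ∧ w x ≤ jd) := by
        intro x hx
        simp only [Finset.mem_filter, Finset.mem_univ, true_and] at hx ⊢
        exact ⟨le_trans hx.1 hlt.le, hx.2⟩
      have hmem : idx b.succ ∈ Finset.univ.filter (fun x : Fin n => x ≤ idx b.succ ∧ w x ≤ jd) := by
        simp [le_of_lt h]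
      have hnot : idx b.succ ∉ Finset.univ.filter (fun x : Fin n => x ≤ idx b.castSucc ∧ w x ≤ jd) := by
        simp only [Finset.mem_filter, Finset.mem_univ, true_and, not_and]
        intro hx
        exact absurd hx (not_le.mpr hlt)
      have hss : Finset.univ.filter (fun x : Fin n => x ≤ idx b.castSucc ∧ w x ≤ jd) ⊂
          Finset.univ.filter (fun x : Fin n => x ≤ idx b.succ ∧ w x ≤ jd) :=
        ⟨hsub, fun hsub' => hnot (hsub' hmem)⟩
      have := Finset.card_lt_card hss
      simp only [rk] at hb ⊢
      simp only [Fin.val_succ]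
      omega
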